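/- Let z1, z2 be real numbers with z1 < 0 and z2 < 0. Then lim_{s → ∞} ((1 − z1/s)(1 − z2/s))^{−s} = e^{z1 + z2}, and consequently ((1 − z1/s)(1 − z2/s))^{−s} > e^{z1 + z2} for every real s ≥ 1. -/

import Mathlib

open Filter in
/-- Limit of `((1 - z1/s)(1 - z2/s))^(-s)` as `s → ∞`, and the strict lower bound
`e^{z1+z2}` for every `s ≥ 1`. -/
theorem FIE_power_tendsto_exp_and_gt
    (z1 z2 : ℝ) (h1 : z1 < 0) (h2 : z2 < 0) :
    Tendsto (fun s : ℝ => ((1 - z1 / s) * (1 - z2 / s)) ^ (-s)) atTop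
      (nhds (Real.exp (z1 + z2))) ∧
    ∀ s : ℝ, 1 ≤ s →
      Real.exp (z1 + z2) < ((1 - z1 / s) * (1 - z2 / s)) ^ (-s) := by
  have key : ∀ z : ℝ, z < 0 →
      Tendsto (fun s : ℝ => (1 - z / s) ^ (-s)) atTop (nhds (Real.exp z)) := by
    intro z hz
    have h := Real.tendsto_one_add_div_rpow_exp (-z)
    have h2 : Tendsto (fun s : ℝ => ((1 + -z / s) ^ s)⁻¹) atTop
        (nhds (Real.exp (-z))⁻¹) := h.inv₀ (Real.exp_ne_zero _)
    rw [← Real.exp_neg, neg_neg] at h2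
    refine h2.congr' ?_
    filter_upwards [eventually_gt_atTop (0:ℝ)] with s hs
    have hb : (0:ℝ) ≤ 1 + -z / s := by
      have : 0 ≤ -z / s := div_nonneg (by linarith) hs.le
      linarith
    rw [sub_eq_add_neg, ← neg_div, Real.rpow_neg hb]
  constructor
  · have hmul := (key z1 h1).mul (key z2 h2)
    rw [← Real.exp_add] at hmul
    refine hmul.congr' ?_
    filter_upwards [eventually_gt_atTop (0:ℝ)] with s hs
    have hb1 : (0:ℝ) ≤ 1 - z1 / s := by
      have : z1 / s < 0 := div_neg_of_neg_of_pos h1 hs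
      linarith
    have hb2 : (0:ℝ) ≤ 1 - z2 / s := by
      have : z2 / s < 0 := div_neg_of_neg_of_pos h2 hs
      linarith
    rw [Real.mul_rpow hb1 hb2]
  · intro s hs
    have hsp : (0:ℝ) < s := lt_of_lt_of_le one_pos hs
    have hd1 : z1 / s < 0 := div_neg_of_neg_of_pos h1 hsp
    have hd2 : z2 / s < 0 := div_neg_of_neg_of_pos h2 hsp
    have hb1 : (0:ℝ) < 1 - z1 / s := by linarith
    have hb2 : (0:ℝ) < 1 - z2 / s := by linarith
    have hlog1 : Real.log (1 - z1 / s) < -(z1 / s) := by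
      have := Real.log_lt_sub_one_of_pos hb1 (ne_of_gt (by linarith))
      linarith
    have hlog2 : Real.log (1 - z2 / s) < -(z2 / s) := by
      have := Real.log_lt_sub_one_of_pos hb2 (ne_of_gt (by linarith))
      linarith
    have hbm : (0:ℝ) < (1 - z1 / s) * (1 - z2 / s) := mul_pos hb1 hb2
    rw [Real.rpow_def_of_pos hbm]
    rw [Real.exp_lt_exp]
    rw [Real.log_mul hb1.ne' hb2.ne']
    have e1 : s * (z1 / s) = z1 := mul_div_cancel₀ z1 hsp.ne'
    have e2 : s * (z2 / s) = z2 := mul_div_cancel₀ z2 hsp.ne'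
    nlinarith [mul_lt_mul_of_pos_left hlog1 hsp, mul_lt_mul_of_pos_left hlog2 hsp]
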